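/- Let C₁ > 0 and C₂ > 0 and let ψ(u) := C₂√(u(C₁−u)) / (π(C₂² + u(C₁−u))). Then ∫₀^{C₁} ψ(u)/u du = C₁/√(C₁² + 4C₂²). -/

import Mathlib

set_option maxHeartbeats 1000000 in
lemma alg (x s S C₁ C₂ P : ℝ) (hx : 0 < x) (hs : 0 < s) (hS : 0 < S) (hC₂ : 0 < C₂) (hπ : 0 < P)
    (hC₁ : 0 < C₁) (hs2 : s^2 = x*(C₁-x)) (hS2 : S^2 = C₁^2+4*C₂^2) :
    C₂ * s / (P * (C₂^2 + x*(C₁-x))) / x =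
    (2*C₂/(P*S)) * ((S-C₁)/(2*C₂) * ((1/(1+((S+C₁)/(2*C₂)*(s/x))^2)) * ((S+C₁)/(2*C₂) * (-C₁/x^2/(2*(s/x)))))
      - (S+C₁)/(2*C₂) * ((1/(1+((s/x)/((S+C₁)/(2*C₂)))^2)) * (-C₁/x^2/(2*(s/x))/((S+C₁)/(2*C₂))))) := by
  have h1 : (0:ℝ) < 1 + ((S+C₁)/(2*C₂)*(s/x))^2 := by positivity
  have h2 : (0:ℝ) < 1 + ((s/x)/((S+C₁)/(2*C₂)))^2 := by positivity
  have h3 : (0:ℝ) < C₂^2 + x*(C₁-x) := by nlinarith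
  have h4 : (0:ℝ) < S + C₁ := by positivity
  field_simp
  rw [show C₂^2 = (S^2-C₁^2)/4 by linarith, hs2]
  ring



open Real MeasureTheory Filter Set Topology intervalIntegral

/-- The density ψ of the absolutely continuous part of the JKD representing measure. -/
noncomputable def psi (C₁ C₂ u : ℝ) : ℝ :=
  C₂ * Real.sqrt (u * (C₁ - u)) / (Real.pi * (C₂ ^ 2 + u * (C₁ - u)))

set_option maxHeartbeats 1000000 in
theorem stmt2 (C₁ C₂ : ℝ) (hC₁ : 0 < C₁) (hC₂ : 0 < C₂) :
    ∫ u in (0:ℝ)..C₁, psi C₁ C₂ u / u = C₁ / Real.sqrt (C₁ ^ 2 + 4 * C₂ ^ 2) := by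
  have hπ := Real.pi_pos
  set S := Real.sqrt (C₁ ^ 2 + 4 * C₂ ^ 2) with hSdef
  have hS : 0 < S := Real.sqrt_pos.2 (by positivity)
  have hS2 : S ^ 2 = C₁ ^ 2 + 4 * C₂ ^ 2 := Real.sq_sqrt (by positivity)
  have hCS : C₁ < S := by nlinarith
  set β : ℝ := (S + C₁) / (2 * C₂) with hβdef
  set α : ℝ := (S - C₁) / (2 * C₂) with hαdef
  have hβ : 0 < β := by positivity
  have hα : 0 < α := div_pos (by linarith) (by positivity)
  set K : ℝ := 2 * C₂ / (Real.pi * S) with hKdef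
  set t : ℝ → ℝ := fun u => Real.sqrt ((C₁ - u) / u) with htdef
  set F : ℝ → ℝ := fun u => K * (α * Real.arctan (β * t u) - β * Real.arctan (t u / β))
    with hFdef
  -- derivative
  have hderiv : ∀ x ∈ Set.Ioo (0:ℝ) C₁, HasDerivAt F (psi C₁ C₂ x / x) x := by
    intro x hx
    obtain ⟨hx0, hx1⟩ := hx
    have hq : 0 < (C₁ - x) / x := div_pos (by linarith) hx0
    have hτ : 0 < t x := Real.sqrt_pos.2 hq
    have h1 : HasDerivAt (fun u => (C₁ - u) / u) ((-C₁) / x ^ 2) x := by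
      have := ((hasDerivAt_const x C₁).sub (hasDerivAt_id x)).div (hasDerivAt_id x) hx0.ne'
      refine this.congr_deriv ?_
      simp only [id, Pi.sub_apply]
      ring
    have h2 : HasDerivAt t ((-C₁) / x ^ 2 / (2 * t x)) x := h1.sqrt hq.ne'
    have h3 : HasDerivAt (fun u => Real.arctan (β * t u))
        ((1 / (1 + (β * t x) ^ 2)) * (β * ((-C₁) / x ^ 2 / (2 * t x)))) x :=
      by have := (Real.hasDerivAt_arctan (β * t x)).comp x (h2.const_mul β); exact this
    have h4 : HasDerivAt (fun u => Real.arctan (t u / β))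
        ((1 / (1 + (t x / β) ^ 2)) * ((-C₁) / x ^ 2 / (2 * t x) / β)) x :=
      by have := (Real.hasDerivAt_arctan (t x / β)).comp x (h2.div_const β); exact this
    have hF : HasDerivAt F (K * (α * ((1 / (1 + (β * t x) ^ 2)) * (β * ((-C₁) / x ^ 2 / (2 * t x))))
        - β * ((1 / (1 + (t x / β) ^ 2)) * ((-C₁) / x ^ 2 / (2 * t x) / β)))) x :=
      ((h3.const_mul α).sub (h4.const_mul β)).const_mul K
    convert hF using 1
    set s : ℝ := Real.sqrt (x * (C₁ - x)) with hsdef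
    have hxC : 0 < x * (C₁ - x) := by nlinarith
    have hs : 0 < s := Real.sqrt_pos.2 hxC
    have hs2 : s ^ 2 = x * (C₁ - x) := Real.sq_sqrt hxC.le
    have hτs : t x = s / x := by
      show Real.sqrt ((C₁ - x) / x) = Real.sqrt (x * (C₁ - x)) / x
      rw [show (C₁ - x) / x = x * (C₁ - x) / x ^ 2 by field_simp]
      rw [Real.sqrt_div hxC.le, Real.sqrt_sq hx0.le]
    rw [hτs, hKdef, hαdef, hβdef]
    simp only [psi]
    exact alg x s S C₁ C₂ Real.pi hx0 hs hS hC₂ hπ hC₁ hs2 hS2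
  -- integrability
  have hint : IntervalIntegrable (fun u => psi C₁ C₂ u / u) volume 0 C₁ := by
    rw [intervalIntegrable_iff_integrableOn_Ioc_of_le hC₁.le]
    have hg : IntegrableOn (fun u : ℝ => Real.sqrt C₁ / (Real.pi * C₂) * u ^ (-(1/2) : ℝ))
        (Set.Ioc 0 C₁) := by
      have h := (intervalIntegral.intervalIntegrable_rpow'
        (a := 0) (b := C₁) (r := -(1/2)) (by norm_num)).const_mul (Real.sqrt C₁ / (Real.pi * C₂))
      rwa [intervalIntegrable_iff_integrableOn_Ioc_of_le hC₁.le] at h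
    have hmeas : AEStronglyMeasurable (fun u => psi C₁ C₂ u / u)
        (volume.restrict (Set.Ioc 0 C₁)) := by
      apply ContinuousOn.aestronglyMeasurable _ measurableSet_Ioc
      intro u hu
      have hu0 : (0:ℝ) < u := hu.1
      have hden : Real.pi * (C₂ ^ 2 + u * (C₁ - u)) ≠ 0 := by
        have : 0 ≤ u * (C₁ - u) := mul_nonneg hu0.le (by linarith [hu.2])
        positivity
      apply ContinuousAt.continuousWithinAt
      exact ((continuousAt_const.mul (Real.continuous_sqrt.continuousAt.comp
        (continuousAt_id.mul (continuousAt_const.sub continuousAt_id)))).div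
        (continuousAt_const.mul (continuousAt_const.add
        (continuousAt_id.mul (continuousAt_const.sub continuousAt_id)))) hden).div
        continuousAt_id hu0.ne'
    refine hg.mono' hmeas ?_
    rw [ae_restrict_iff' measurableSet_Ioc]
    filter_upwards with u hu
    have hu0 : (0:ℝ) < u := hu.1
    have huC : u ≤ C₁ := hu.2
    have hP : 0 ≤ u * (C₁ - u) := mul_nonneg hu0.le (by linarith)
    have husq : Real.sqrt u * Real.sqrt u = u := Real.mul_self_sqrt hu0.le
    have hrpow : u ^ (-(1/2) : ℝ) = Real.sqrt u / u := by
      rw [Real.rpow_neg hu0.le, ← Real.sqrt_eq_rpow]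
      field_simp
      rw [Real.sq_sqrt hu0.le]
    have hnonneg : 0 ≤ psi C₁ C₂ u / u := by
      apply div_nonneg _ hu0.le
      apply div_nonneg (by positivity)
      positivity
    rw [Real.norm_eq_abs, abs_of_nonneg hnonneg]
    have hkey : Real.sqrt (u * (C₁ - u)) ≤ Real.sqrt u * Real.sqrt C₁ := by
      rw [← Real.sqrt_mul hu0.le]
      exact Real.sqrt_le_sqrt (by nlinarith)
    calc psi C₁ C₂ u / u = C₂ * Real.sqrt (u * (C₁ - u)) / (Real.pi * (C₂ ^ 2 + u * (C₁ - u)) * u) := by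
          simp only [psi]; rw [div_div]
      _ ≤ C₂ * (Real.sqrt u * Real.sqrt C₁) / (Real.pi * C₂ ^ 2 * u) := by
          apply div_le_div₀ (by positivity) (by nlinarith [Real.sqrt_nonneg u, Real.sqrt_nonneg C₁])
            (by positivity) (by nlinarith [mul_nonneg (mul_nonneg Real.pi_pos.le hu0.le) hP])
      _ = Real.sqrt C₁ / (Real.pi * C₂) * u ^ (-(1/2) : ℝ) := by
          rw [hrpow]
          field_simp
  -- limits
  have h0 : Tendsto F (𝓝[>] (0:ℝ)) (𝓝 (-(C₁ / S))) := by
    have hsq : Tendsto Real.sqrt atTop atTop := by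
      rw [show Real.sqrt = fun x : ℝ => x ^ ((1:ℝ)/2) from funext fun x => Real.sqrt_eq_rpow x]
      exact tendsto_rpow_atTop (by norm_num)
    have ht0 : Tendsto (fun u => (C₁ - u) / u) (𝓝[>] (0:ℝ)) atTop := by
      have h := tendsto_inv_nhdsGT_zero (𝕜 := ℝ)
      have h2 : Tendsto (fun u : ℝ => C₁ * u⁻¹ + -1) (𝓝[>] (0:ℝ)) atTop :=
        tendsto_atTop_add_const_right _ (-1) (h.const_mul_atTop hC₁)
      refine h2.congr' ?_
      filter_upwards [self_mem_nhdsWithin] with u hu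
      have hu' : (u:ℝ) ≠ 0 := ne_of_gt hu
      field_simp
      ring
    have htt : Tendsto t (𝓝[>] (0:ℝ)) atTop := hsq.comp ht0
    have harc1 : Tendsto (fun u => Real.arctan (β * t u)) (𝓝[>] (0:ℝ)) (𝓝 (π / 2)) :=
      (tendsto_nhds_of_tendsto_nhdsWithin Real.tendsto_arctan_atTop).comp
        (htt.const_mul_atTop hβ)
    have harc2 : Tendsto (fun u => Real.arctan (t u / β)) (𝓝[>] (0:ℝ)) (𝓝 (π / 2)) :=
      (tendsto_nhds_of_tendsto_nhdsWithin Real.tendsto_arctan_atTop).comp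
        (htt.atTop_div_const hβ)
    have hconv : Tendsto F (𝓝[>] (0:ℝ)) (𝓝 (K * (α * (π / 2) - β * (π / 2)))) :=
      ((harc1.const_mul α).sub (harc2.const_mul β)).const_mul K
    convert hconv using 2
    rw [hKdef, hαdef, hβdef]
    field_simp
    ring
  have h1 : Tendsto F (𝓝[<] C₁) (𝓝 0) := by
    have hc : ContinuousAt F C₁ := by
      have hq : ContinuousAt (fun u => (C₁ - u) / u) C₁ :=
        (continuousAt_const.sub continuousAt_id).div continuousAt_id hC₁.ne'
      have h2 : ContinuousAt t C₁ := Real.continuous_sqrt.continuousAt.comp hq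
      exact continuousAt_const.mul (((Real.continuous_arctan.continuousAt.comp
        (continuousAt_const.mul h2)).const_mul α).sub
        ((Real.continuous_arctan.continuousAt.comp (h2.div_const β)).const_mul β))
    have hF1 : F C₁ = 0 := by
      simp [hFdef, htdef]
    rw [← hF1]
    exact hc.continuousWithinAt.tendsto
  have key := intervalIntegral.integral_eq_sub_of_hasDerivAt_of_tendsto hC₁ hderiv hint h0 h1
  rw [key]
  ring
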